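/- Let r : [0,∞) → ℝ be differentiable with r(0) ≥ α(0), and suppose r'(τ) ≥ α'(τ) whenever r(τ) ≤ R(τ) + α(τ), where R(τ) ≥ 0 and α is differentiable. Then r(τ) ≥ α(τ) for all τ ≥ 0. -/
import Mathlib


theorem stmt_9 (r α r' α' : ℝ → ℝ) (R : ℝ → ℝ)
    (hrd : ∀ τ : ℝ, 0 ≤ τ → HasDerivAt r (r' τ) τ)
    (hαd : ∀ τ : ℝ, 0 ≤ τ → HasDerivAt α (α' τ) τ)
    (hRcont : Continuous R)
    (hRpos : ∀ τ : ℝ, 0 ≤ τ → 0 ≤ R τ)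
    (h0 : α 0 ≤ r 0)
    (hcond : ∀ τ : ℝ, 0 ≤ τ → r τ ≤ R τ + α τ → α' τ ≤ r' τ) :
    ∀ τ : ℝ, 0 ≤ τ → α τ ≤ r τ := by
  set f : ℝ → ℝ := fun x => r x - α x with hf
  have hfd : ∀ τ : ℝ, 0 ≤ τ → HasDerivAt f (r' τ - α' τ) τ := fun τ hτ =>
    (hrd τ hτ).sub (hαd τ hτ)
  have hfc : ∀ τ : ℝ, 0 ≤ τ → ContinuousAt f τ := fun τ hτ =>
    (hfd τ hτ).continuousAt
  intro t ht
  by_contra hlt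
  push_neg at hlt
  have hft : f t < 0 := by simp [hf]; linarith
  have hf0 : 0 ≤ f 0 := by simp [hf]; linarith
  -- the set of points in [0,t] where f ≥ 0
  set K : Set ℝ := Set.Icc 0 t ∩ f ⁻¹' Set.Ici 0 with hK
  have hfcOn : ContinuousOn f (Set.Icc 0 t) := fun x hx =>
    (hfc x hx.1).continuousWithinAt
  have hKclosed : IsClosed K := by
    exact hfcOn.preimage_isClosed_of_isClosed isClosed_Icc (isClosed_Ici (a := (0:ℝ)))
  have hKcompact : IsCompact K :=
    isCompact_Icc.of_isClosed_subset hKclosed Set.inter_subset_left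
  have hKne : K.Nonempty := ⟨0, ⟨le_refl 0, ht⟩, hf0⟩
  obtain ⟨hsK⟩ : ∃ _ : sSup K ∈ K, True := ⟨hKcompact.sSup_mem hKne, trivial⟩
  set s := sSup K with hs
  have hs0 : 0 ≤ s := hsK.1.1
  have hst : s ≤ t := hsK.1.2
  have hfs : 0 ≤ f s := hsK.2
  have hslt : s < t := lt_of_le_of_ne hst (fun h => by rw [h] at hfs; linarith)
  -- on (s,t), f < 0, hence derivative nonneg
  have hneg : ∀ x ∈ Set.Ioo s t, f x < 0 := by
    intro x hx
    by_contra h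
    push_neg at h
    have hxK : x ∈ K := ⟨⟨le_trans hs0 hx.1.le, hx.2.le⟩, h⟩
    have := le_csSup hKcompact.bddAbove hxK
    linarith [hx.1]
  have hderiv : ∀ x ∈ Set.Ioo s t, 0 ≤ deriv f x := by
    intro x hx
    have hx0 : 0 ≤ x := le_trans hs0 hx.1.le
    have hcond' : r x ≤ R x + α x := by
      have := hneg x hx
      have := hRpos x hx0
      simp only [hf] at *
      linarith
    have := hcond x hx0 hcond'
    rw [(hfd x hx0).deriv]
    linarith
  have hmono : MonotoneOn f (Set.Icc s t) := by
    apply monotoneOn_of_deriv_nonneg (convex_Icc s t)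
    · exact fun x hx => (hfc x (le_trans hs0 hx.1)).continuousWithinAt
    · intro x hx
      rw [interior_Icc] at hx
      exact ((hfd x (le_trans hs0 hx.1.le)).differentiableAt).differentiableWithinAt
    · intro x hx
      rw [interior_Icc] at hx
      exact hderiv x hx
  have := hmono ⟨le_refl s, hst⟩ ⟨hst, le_refl t⟩ hst
  linarith
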